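/- Let f : |P| → |Q| be a weak morphism of precubical sets that is a homeomorphism, let X ⊆ P and A ⊆ Q be precubical subsets, and let a ∈ Q. Then: (i) a ∈ f(X) if and only if the carrier c(a) ∈ X; (ii) A ⊆ f(c(A)); (iii) c(f(X)) = X, where f(X) denotes the image precubical subset and c denotes carriers. -/

import Mathlib

/-- A graded set with boundary operators: the data of a precubical set.
`cell` is the set of all cubes, `deg` the degree, and `d b i x` the face
`dᵢᵇ x`, meaningful for `1 ≤ i ≤ deg x` (`b = false` is `d⁰`, `b = true` is `d¹`). -/
structure PrecubicalSet where
  cell : Type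
  deg : cell → ℕ
  d : Bool → ℕ → cell → cell

/-- `P` is a genuine precubical set: faces lower degree by one and the
precubical relations `dᵢᵏ ∘ dⱼˡ = dⱼ₋₁ˡ ∘ dᵢᵏ` hold for `i < j`. -/
def PrecubicalSet.IsPrecubical (P : PrecubicalSet) : Prop :=
  (∀ (b : Bool) (i : ℕ) (x : P.cell), 1 ≤ i → i ≤ P.deg x →
      P.deg (P.d b i x) = P.deg x - 1) ∧
  (∀ (b b' : Bool) (i j : ℕ) (x : P.cell), 1 ≤ i → i < j → j ≤ P.deg x →
      P.d b i (P.d b' j x) = P.d b' (j - 1) (P.d b i x))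

/-- A precubical subset: a graded subset stable under the boundary operators. -/
def PrecubicalSet.IsSub (P : PrecubicalSet) (X : Set P.cell) : Prop :=
  ∀ (b : Bool) (i : ℕ) (x : P.cell), 1 ≤ i → i ≤ P.deg x → x ∈ X → P.d b i x ∈ X

/-- A morphism of precubical sets: a degree-preserving map commuting with the
boundary operators (on their meaningful range of indices). -/
structure PrecubicalHom (P Q : PrecubicalSet) where
  map : P.cell → Q.cell
  deg_map : ∀ x, Q.deg (map x) = P.deg x
  d_map : ∀ (b : Bool) (i : ℕ) (x : P.cell), 1 ≤ i → i ≤ P.deg x →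
    map (P.d b i x) = Q.d b i (map x)
open CategoryTheory

noncomputable section
open scoped Classical DirectSum

instance (P : PrecubicalSet) : TopologicalSpace P.cell := ⊥

namespace PrecubicalSet

variable (P : PrecubicalSet)

/-- The disjoint union `⨿ₙ Pₙ × [0,1]ⁿ` (cells carry the discrete topology). -/
def ESpace : Type := Σ x : P.cell, Fin (P.deg x) → unitInterval

instance : TopologicalSpace P.ESpace := by unfold ESpace; infer_instance

/-- The map `δᵢᵇ : [0,1]^m → [0,1]^{m+1}` inserting the coordinate `b` at
position `i` (1-based). -/
def insCoord {m : ℕ} (b : Bool) (i : ℕ) (u : Fin m → unitInterval) :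
    Fin (m + 1) → unitInterval :=
  fun j =>
    if (j : ℕ) + 1 < i then (if h : (j : ℕ) < m then u ⟨j, h⟩ else 0)
    else if (j : ℕ) + 1 = i then (if b then 1 else 0)
    else if h : (j : ℕ) - 1 < m then u ⟨(j : ℕ) - 1, h⟩ else 0

/-- The gluing relation of the geometric realisation:
`(dᵢᵇ x, u) ∼ (x, δᵢᵇ u)`. -/
def RelE : P.ESpace → P.ESpace → Prop := fun a z =>
  ∃ (b : Bool) (i : ℕ), 1 ≤ i ∧ i ≤ P.deg z.1 ∧ a.1 = P.d b i z.1 ∧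
    HEq (insCoord b i a.2) z.2

/-- The geometric realisation `|P|` of a precubical set. -/
def GeomReal : Type := Quot P.RelE

instance : TopologicalSpace P.GeomReal := by unfold GeomReal; infer_instance

/-- The point `[x, u]` of `|P|`. -/
def pt (x : P.cell) (u : Fin (P.deg x) → unitInterval) : P.GeomReal :=
  Quot.mk _ ⟨x, u⟩

end PrecubicalSet

namespace PrecubicalSet

/-- The midpoint `½ ∈ [0,1]`. -/
def half : unitInterval := ⟨1/2, by norm_num⟩

/-- The degree of a cell of the grid: a grid cell assigns to each of the `n`
coordinates either a vertex `j` (`(j, false)`) or an edge `[j, j+1]`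
(`(j, true)`); the degree is the number of edge coordinates. -/
def gridDeg {n : ℕ} (c : Fin n → ℕ × Bool) : ℕ :=
  (Finset.univ.filter fun i => (c i).2 = true).card

/-- The boundary operator of the grid: `dₘᵇ` replaces the `m`-th edge
coordinate `[j, j+1]` by the vertex `j` (`b = false`) or `j+1` (`b = true`). -/
def gridD {n : ℕ} (b : Bool) (m : ℕ) (c : Fin n → ℕ × Bool) : Fin n → ℕ × Bool :=
  fun i =>
    if (c i).2 = true ∧
        (Finset.univ.filter fun i' => (c i').2 = true ∧ i' < i).card + 1 = m
    then ((c i).1 + (if b then 1 else 0), false) else c i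

/-- The precubical set `⟦0,k₁⟧ ⊗ ⋯ ⊗ ⟦0,kₙ⟧`. -/
def BoxData {n : ℕ} (k : Fin n → ℕ) : PrecubicalSet where
  cell := {c : Fin n → ℕ × Bool // ∀ i, (c i).1 + (if (c i).2 then 1 else 0) ≤ k i}
  deg := fun c => gridDeg c.1
  d := fun b m c => ⟨gridD b m c.1, by
    intro i
    dsimp only [gridD]
    split
    · rename_i h
      have h2 := c.2 i
      rw [h.1] at h2
      simp only [if_true] at h2
      cases b <;> simp <;> omega
    · exact c.2 i⟩

/-- The cell of the box `⟦0,k₁⟧ ⊗ ⋯ ⊗ ⟦0,kₙ⟧` in whose relatively open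
realisation a point `t ∈ [0,k₁] × ⋯ × [0,kₙ]` lies. -/
noncomputable def cellOf {n : ℕ} (k : Fin n → ℕ)
    (t : ∀ i, Set.Icc (0:ℝ) (k i : ℝ)) : (BoxData k).cell :=
  ⟨fun i => if ((t i : ℝ) = (⌊(t i : ℝ)⌋ : ℤ))
      then ((⌊(t i : ℝ)⌋).toNat, false) else ((⌊(t i : ℝ)⌋).toNat, true), by
    intro i
    have h1 : ⌊(t i : ℝ)⌋ ≤ (k i : ℤ) := by
      have := Int.floor_mono (t i).2.2
      simpa using this
    have h0 : 0 ≤ ⌊(t i : ℝ)⌋ := Int.floor_nonneg.mpr (t i).2.1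
    dsimp only
    split
    · simp only [Bool.false_eq_true, if_false, add_zero]
      omega
    · rename_i h
      have h2 : (t i : ℝ) < (k i : ℝ) := by
        rcases lt_or_eq_of_le (t i).2.2 with h' | h'
        · exact h'
        · exact absurd (by rw [h']; exact_mod_cast (Int.floor_natCast (k i)).symm) h
      have h3 : ⌊(t i : ℝ)⌋ < (k i : ℤ) := by
        rw [Int.floor_lt]
        exact_mod_cast h2
      simp only [if_true]
      omega⟩

/-- The coordinates of `t` inside the open cell of `cellOf k t`: the fractional
parts of the edge coordinates, in order. -/
noncomputable def uOf {n : ℕ} (k : Fin n → ℕ)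
    (t : ∀ i, Set.Icc (0:ℝ) (k i : ℝ)) :
    Fin ((BoxData k).deg (cellOf k t)) → unitInterval :=
  fun m =>
    ⟨Int.fract ((t ((((Finset.univ.filter
          fun i => (((cellOf k t).1 i).2 = true)).orderIsoOfFin rfl) m : _) : Fin n)) : ℝ),
      Int.fract_nonneg _, (Int.fract_lt_one _).le⟩

variable {P Q : PrecubicalSet}

/-- The image of the point of `|⟦0,k₁⟧ ⊗ ⋯ ⊗ ⟦0,kₙ⟧| = [0,k₁] × ⋯ × [0,kₙ]`
with coordinates `t` under the geometric realisation `|ξ|` of a morphism of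
precubical sets `ξ : ⟦0,k₁⟧ ⊗ ⋯ ⊗ ⟦0,kₙ⟧ → P`. -/
noncomputable def realBox {n : ℕ} {k : Fin n → ℕ}
    (ξ : PrecubicalHom (BoxData k) P) (t : ∀ i, Set.Icc (0:ℝ) (k i : ℝ)) :
    P.GeomReal :=
  P.pt (ξ.map (cellOf k t)) (uOf k t ∘ Fin.cast (ξ.deg_map _))

/-- `f : |P| → |Q|` is a weak morphism of precubical sets: it sends vertices to
vertices, and for every morphism of precubical sets
`ξ : ⟦0,k₁⟧ ⊗ ⋯ ⊗ ⟦0,kₙ⟧ → P` there are a morphism of precubical sets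
`χ : ⟦0,l₁⟧ ⊗ ⋯ ⊗ ⟦0,lₙ⟧ → Q` and a dihomeomorphism
`φ : [0,k₁] × ⋯ × [0,kₙ] → [0,l₁] × ⋯ × [0,lₙ]` with `f ∘ |ξ| = |χ| ∘ φ`. -/
def IsWeakMorphism (f : P.GeomReal → Q.GeomReal) : Prop :=
  (∀ v : P.cell, P.deg v = 0 →
      ∃ w : Q.cell, Q.deg w = 0 ∧
        f (P.pt v fun _ => half) = Q.pt w fun _ => half) ∧
  ∀ (n : ℕ) (k : Fin n → ℕ), (∀ i, 1 ≤ k i) →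
    ∀ ξ : PrecubicalHom (BoxData k) P,
      ∃ (l : Fin n → ℕ), (∀ i, 1 ≤ l i) ∧
        ∃ (χ : PrecubicalHom (BoxData l) Q)
          (φ : (∀ i, Set.Icc (0:ℝ) (k i : ℝ)) ≃ₜ (∀ i, Set.Icc (0:ℝ) (l i : ℝ))),
          (∀ s t, s ≤ t ↔ φ s ≤ φ t) ∧
          ∀ t, f (realBox ξ t) = realBox χ (φ t)

/-- `p ∈ P` is the carrier of `a ∈ Q` with respect to `f : |P| → |Q|`: there is
`u` in the open cube with `f([p,u]) = [a,(½,…,½)]`.  (For a weak morphism that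
is a homeomorphism, the carrier of `a` exists and is unique.) -/
def IsCarrier (f : P.GeomReal → Q.GeomReal) (p : P.cell) (a : Q.cell) : Prop :=
  ∃ u : Fin (P.deg p) → unitInterval,
    (∀ j, (u j : ℝ) ∈ Set.Ioo (0:ℝ) 1) ∧
    f (P.pt p u) = Q.pt a fun _ => half

/-- The precubical subset `x♯(⟦0,1⟧^{⊗ deg x})` generated by a cube `x`:
all iterated faces of `x`. -/
def gen (P : PrecubicalSet) (x : P.cell) : Set P.cell :=
  {y | Relation.ReflTransGen
    (fun a c => ∃ (b : Bool) (i : ℕ), 1 ≤ i ∧ i ≤ P.deg c ∧ a = P.d b i c) y x}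

/-- The subset `|X| ⊆ |P|` determined by a precubical subset `X ⊆ P`. -/
def geomSet (P : PrecubicalSet) (X : Set P.cell) : Set P.GeomReal :=
  {z | ∃ x ∈ X, ∃ u, z = P.pt x u}

/-- The carrier `c(A) = ⋃_{a ∈ A} c(a)♯(⟦0,1⟧^{⊗ deg c(a)})` of a precubical
subset `A ⊆ Q`, where `c` is the carrier function of `f`. -/
def carrierSet (c : Q.cell → P.cell) (A : Set Q.cell) : Set P.cell :=
  {p | ∃ a ∈ A, p ∈ P.gen (c a)}

/-- `z` is a top cube of `S`: `z ∈ S` and `z` is not a proper iterated face of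
any element of `S`. -/
def TopCube (P : PrecubicalSet) (S : Set P.cell) (z : P.cell) : Prop :=
  z ∈ S ∧ ∀ x ∈ S, P.deg z < P.deg x → z ∉ P.gen x

/-- An `n`-cube `x ∈ P` is broken in the precubical subset `A ⊆ Q` (with
respect to `f` with carrier function `c`): `x ∈ c(A)` and
`f(x♯(⟦0,1⟧^{⊗n})) ⊄ A` (on geometric realisations). -/
def Broken (f : P.GeomReal → Q.GeomReal) (c : Q.cell → P.cell)
    (A : Set Q.cell) (x : P.cell) : Prop :=
  x ∈ carrierSet c A ∧ ¬ (f '' P.geomSet (P.gen x) ⊆ Q.geomSet A)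

end PrecubicalSet

namespace PrecubicalSet

variable {P : PrecubicalSet}

/-- Totalization of a tuple of interval points, with junk value `half`. -/
def extF {m : ℕ} (u : Fin m → unitInterval) : ℕ → unitInterval :=
  fun j => if h : j < m then u ⟨j, h⟩ else half

lemma extF_lt {m : ℕ} (u : Fin m → unitInterval) {j : ℕ} (h : j < m) :
    extF u j = u ⟨j, h⟩ := dif_pos h

lemma extF_ge {m : ℕ} (u : Fin m → unitInterval) {j : ℕ} (h : ¬ j < m) :
    extF u j = half := dif_neg h

/-- Untyped version of `insCoord`. -/
def insCoordExt (i : ℕ) (b : Bool) (w : ℕ → unitInterval) : ℕ → unitInterval :=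
  fun j => if j + 1 < i then w j else if j + 1 = i then (if b then 1 else 0) else w (j - 1)

lemma insCoord_extF {m : ℕ} (b : Bool) (i : ℕ) (hi1 : 1 ≤ i) (hi2 : i ≤ m + 1)
    (w : Fin m → unitInterval) (j : ℕ) (hj : j < m + 1) :
    insCoord b i w ⟨j, hj⟩ = insCoordExt i b (extF w) j := by
  unfold insCoord insCoordExt extF
  by_cases h1 : j + 1 < i
  · rw [if_pos h1, if_pos h1, dif_pos (show j < m by omega), dif_pos (show j < m by omega)]
  · rw [if_neg h1, if_neg h1]
    by_cases h2 : j + 1 = i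
    · rw [if_pos h2, if_pos h2]
    · rw [if_neg h2, if_neg h2, dif_pos (show j - 1 < m by omega),
        dif_pos (show j - 1 < m by omega)]

lemma unit_zero_ne_one : (0 : unitInterval) ≠ 1 := by
  intro h
  have := congrArg (Subtype.val) h
  norm_num at this

lemma half_mem_Ioo : ((half : unitInterval) : ℝ) ∈ Set.Ioo (0:ℝ) 1 := by
  constructor <;> norm_num [half]

/-- Normal form of a point `(x, u)` : strip off boundary coordinates as long as
there are any, lowering to the corresponding face.  `fuel`-based recursion. -/
noncomputable def NFaux (P : PrecubicalSet) :
    ℕ → (x : P.cell) → (Fin (P.deg x) → unitInterval) → P.cell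
  | 0, x, _ => x
  | (fuel+1), x, u =>
    if h : ∃ j, j < P.deg x ∧ (extF u j = 0 ∨ extF u j = 1) then
      NFaux P fuel
        (P.d (if extF u (Nat.find h) = 1 then true else false) (Nat.find h + 1) x)
        (fun r => extF u (if (r : ℕ) < Nat.find h then (r : ℕ) else (r : ℕ) + 1))
    else x

lemma NFaux_succ_of_ex {fuel : ℕ} {x : P.cell} {u : Fin (P.deg x) → unitInterval}
    (h : ∃ j, j < P.deg x ∧ (extF u j = 0 ∨ extF u j = 1)) :
    NFaux P (fuel+1) x u = NFaux P fuel
        (P.d (if extF u (Nat.find h) = 1 then true else false) (Nat.find h + 1) x)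
        (fun r => extF u (if (r : ℕ) < Nat.find h then (r : ℕ) else (r : ℕ) + 1)) := by
  simp only [NFaux]
  rw [dif_pos h]

lemma NFaux_of_not {fuel : ℕ} {x : P.cell} {u : Fin (P.deg x) → unitInterval}
    (h : ¬ ∃ j, j < P.deg x ∧ (extF u j = 0 ∨ extF u j = 1)) :
    NFaux P fuel x u = x := by
  cases fuel <;> simp [NFaux, h]

lemma NFaux_interior {fuel : ℕ} {x : P.cell} {u : Fin (P.deg x) → unitInterval}
    (hu : ∀ j : Fin (P.deg x), (u j : ℝ) ∈ Set.Ioo (0:ℝ) 1) :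
    NFaux P fuel x u = x := by
  apply NFaux_of_not
  rintro ⟨j, hj, hcon⟩
  have hm := hu ⟨j, hj⟩
  rw [extF_lt u hj] at hcon
  rcases hcon with h | h <;> rw [h] at hm <;> norm_num [Set.mem_Ioo] at hm

lemma NFaux_gen : ∀ (fuel : ℕ) (x : P.cell) (u : Fin (P.deg x) → unitInterval),
    NFaux P fuel x u ∈ P.gen x := by
  intro fuel
  induction fuel with
  | zero => intro x u; exact Relation.ReflTransGen.refl
  | succ fuel IH =>
    intro x u
    by_cases h : ∃ j, j < P.deg x ∧ (extF u j = 0 ∨ extF u j = 1)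
    · rw [NFaux_succ_of_ex h]
      refine Relation.ReflTransGen.tail (IH _ _) ?_
      exact ⟨_, Nat.find h + 1, by omega, by have := (Nat.find_spec h).1; omega, rfl⟩
    · rw [NFaux_of_not h]; exact Relation.ReflTransGen.refl

lemma NFaux_ext {fuel : ℕ} : ∀ (x : P.cell) (u v : Fin (P.deg x) → unitInterval),
    extF u = extF v → NFaux P fuel x u = NFaux P fuel x v := by
  induction fuel with
  | zero => intros; rfl
  | succ fuel _ =>
    intro x u v h
    simp only [NFaux]
    rw [h]

end PrecubicalSet

namespace PrecubicalSet

variable {P : PrecubicalSet}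

lemma NFaux_insert (hP : P.IsPrecubical) :
    ∀ m : ℕ, ∀ (x : P.cell), P.deg x = m + 1 → ∀ (b : Bool) (i : ℕ), 1 ≤ i → i ≤ m + 1 →
      ∀ (u : Fin (P.deg x) → unitInterval) (y : P.cell), y = P.d b i x →
      ∀ (v : Fin (P.deg y) → unitInterval),
      (∀ j, j < m + 1 → extF u j = insCoordExt i b (extF v) j) →
      NFaux P (m + 1) x u = NFaux P m y v := by
  intro m
  induction m using Nat.strong_induction_on with
  | _ m IH =>
    intro x hx b i hi1 hi2 u y hy v huv
    have hdy : P.deg y = m := by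
      rw [hy, hP.1 b i x hi1 (by omega)]; omega
    have hbv : extF u (i-1) = (if b then 1 else 0) := by
      rw [huv (i-1) (by omega)]
      unfold insCoordExt
      rw [if_neg (by omega), if_pos (by omega)]
    have hex : ∃ j, j < P.deg x ∧ (extF u j = 0 ∨ extF u j = 1) := by
      refine ⟨i-1, by omega, ?_⟩
      rw [hbv]; cases b
      · left; simp
      · right; simp
    have hspec := Nat.find_spec hex
    have hj0le : Nat.find hex ≤ i - 1 := Nat.find_le (by
      refine ⟨by omega, ?_⟩
      rw [hbv]; cases b
      · left; simp
      · right; simp)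
    set j0 := Nat.find hex with hj0def
    rw [NFaux_succ_of_ex hex]
    rw [← hj0def]
    by_cases hcase : j0 = i - 1
    · -- the stripped coordinate is exactly the inserted one
      have hbb : (if extF u j0 = 1 then true else false) = b := by
        rw [hcase, hbv]; cases b
        · simp only [Bool.false_eq_true, if_false]
          rw [if_neg (fun hcon => unit_zero_ne_one hcon)]
        · simp only [if_true]
      have hidx : j0 + 1 = i := by omega
      rw [hbb, hidx, ← hy]
      apply NFaux_ext
      funext j
      by_cases hjm : j < P.deg y
      · rw [extF_lt _ hjm, extF_lt _ hjm]
        show extF u (if j < j0 then j else j + 1) = v ⟨j, hjm⟩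
        rw [← extF_lt v hjm]
        by_cases hlt : j < j0
        · rw [if_pos hlt, huv j (by omega)]
          unfold insCoordExt
          rw [if_pos (by omega)]
        · rw [if_neg hlt, huv (j+1) (by omega)]
          unfold insCoordExt
          rw [if_neg (show ¬(j + 1 + 1 < i) by omega), if_neg (show ¬(j + 1 + 1 = i) by omega)]
          congr 1
      · rw [extF_ge _ hjm, extF_ge _ hjm]
    · -- the stripped coordinate is below the inserted one
      have hj0lt : j0 < i - 1 := by omega
      have hval : extF u j0 = extF v j0 := by
        rw [huv j0 (by omega)]
        unfold insCoordExt
        rw [if_pos (by omega)]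
      have hex2 : ∃ j, j < P.deg y ∧ (extF v j = 0 ∨ extF v j = 1) := by
        refine ⟨j0, by omega, ?_⟩
        rw [← hval]; exact hspec.2
      have hfind2 : Nat.find hex2 = j0 := by
        apply le_antisymm
        · exact Nat.find_le ⟨by omega, by rw [← hval]; exact hspec.2⟩
        · by_contra hcon
          push_neg at hcon
          have hs2 := Nat.find_spec hex2
          have heq' : extF u (Nat.find hex2) = extF v (Nat.find hex2) := by
            rw [huv (Nat.find hex2) (by omega)]
            unfold insCoordExt
            rw [if_pos (by omega)]
          exact Nat.find_min hex hcon ⟨by omega, by rw [heq']; exact hs2.2⟩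
      obtain ⟨m2, hm2⟩ : ∃ m2, m = m2 + 1 := ⟨m - 1, by omega⟩
      rw [hm2, NFaux_succ_of_ex hex2, hfind2]
      have hvalb : (if extF v j0 = 1 then true else false)
          = (if extF u j0 = 1 then true else false) := by rw [hval]
      rw [hvalb]
      set bb := (if extF u j0 = 1 then true else false) with hbbdef
      -- apply the induction hypothesis
      have hdegx1 : P.deg (P.d bb (j0 + 1) x) = m2 + 1 := by
        rw [hP.1 bb (j0+1) x (by omega) (by omega)]; omega
      have hdegy1 : P.deg (P.d bb (j0 + 1) y) = m2 := by
        rw [hP.1 bb (j0+1) y (by omega) (by omega)]; omega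
      have hcomm : P.d bb (j0 + 1) y = P.d b (i - 1) (P.d bb (j0 + 1) x) := by
        rw [hy, hP.2 bb b (j0+1) i x (by omega) (by omega) (by omega)]
      have := IH m2 (by omega) (P.d bb (j0 + 1) x) hdegx1 b (i-1) (by omega) (by omega)
        (fun r => extF u (if (r : ℕ) < j0 then (r : ℕ) else (r : ℕ) + 1))
        (P.d bb (j0 + 1) y) hcomm
        (fun r => extF v (if (r : ℕ) < j0 then (r : ℕ) else (r : ℕ) + 1))
        ?_
      · exact this
      · -- pointwise compatibility
        intro j hj
        have hjx1 : j < P.deg (P.d bb (j0 + 1) x) := by omega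
        rw [extF_lt _ hjx1]
        show extF u (if j < j0 then j else j + 1) = _
        have hv1 : ∀ r : ℕ, r < m2 →
            extF (fun r : Fin (P.deg (P.d bb (j0 + 1) y)) =>
              extF v (if (r : ℕ) < j0 then (r : ℕ) else (r : ℕ) + 1)) r
            = extF v (if r < j0 then r else r + 1) := by
          intro r hr
          have hrd : r < P.deg (P.d bb (j0 + 1) y) := by rw [hdegy1]; exact hr
          rw [extF_lt _ hrd]
        by_cases hlt : j < j0
        · rw [if_pos hlt, huv j (by omega)]
          unfold insCoordExt
          rw [if_pos (show j + 1 < i by omega), if_pos (show j + 1 < i - 1 by omega),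
            hv1 j (by omega), if_pos hlt]
        · rw [if_neg hlt, huv (j+1) (by omega)]
          unfold insCoordExt
          by_cases hc1 : j + 2 < i
          · rw [if_pos (show j + 1 + 1 < i by omega), if_pos (show j + 1 < i - 1 by omega),
              hv1 j (by omega), if_neg hlt]
          · by_cases hc2 : j + 2 = i
            · rw [if_neg (show ¬(j + 1 + 1 < i) by omega),
                if_pos (show j + 1 + 1 = i by omega),
                if_neg (show ¬(j + 1 < i - 1) by omega),
                if_pos (show j + 1 = i - 1 by omega)]
            · rw [if_neg (show ¬(j + 1 + 1 < i) by omega),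
                if_neg (show ¬(j + 1 + 1 = i) by omega),
                if_neg (show ¬(j + 1 < i - 1) by omega),
                if_neg (show ¬(j + 1 = i - 1) by omega),
                hv1 (j-1) (by omega), if_neg (show ¬(j - 1 < j0) by omega)]
              congr 1
              omega

end PrecubicalSet

namespace PrecubicalSet

variable {P : PrecubicalSet}

lemma heq_fun_ext {α : Type} {m n : ℕ} (h : m = n) {f : Fin m → α} {g : Fin n → α}
    (hfg : HEq f g) (j : ℕ) (hj : j < m) (hj' : j < n) : f ⟨j, hj⟩ = g ⟨j, hj'⟩ := by
  subst h
  rw [eq_of_heq hfg]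

lemma NF_rel (hP : P.IsPrecubical) {a z : P.ESpace} (h : RelE P a z) :
    NFaux P (P.deg z.1) z.1 z.2 = NFaux P (P.deg a.1) a.1 a.2 := by
  obtain ⟨b, i, hi1, hi2, hcell, hheq⟩ := h
  have hda : P.deg a.1 = P.deg z.1 - 1 := by rw [hcell]; exact hP.1 b i z.1 hi1 hi2
  set m := P.deg a.1 with hm
  have hz1 : P.deg z.1 = m + 1 := by omega
  have H : ∀ j, j < m + 1 → extF z.2 j = insCoordExt i b (extF a.2) j := by
    intro j hj
    have h1 : z.2 ⟨j, show j < P.deg z.1 by omega⟩ = insCoord b i a.2 ⟨j, hj⟩ :=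
      (heq_fun_ext (show m + 1 = P.deg z.1 by omega) hheq j hj (by omega)).symm
    rw [extF_lt z.2 (show j < P.deg z.1 by omega), h1,
      insCoord_extF b i hi1 (by omega) a.2 j hj]
  have hmain := NFaux_insert hP m z.1 hz1 b i hi1 (by omega) z.2 a.1 hcell a.2 H
  rw [hz1]
  exact hmain

lemma NF_eqvGen (hP : P.IsPrecubical) {w1 w2 : P.ESpace}
    (h : Relation.EqvGen (RelE P) w1 w2) :
    NFaux P (P.deg w1.1) w1.1 w1.2 = NFaux P (P.deg w2.1) w2.1 w2.2 := by
  induction h with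
  | rel a z hr => exact (NF_rel hP hr).symm
  | refl _ => rfl
  | symm _ _ _ ih => exact ih.symm
  | trans _ _ _ _ _ ih1 ih2 => exact ih1.trans ih2

lemma NF_of_pt_eq (hP : P.IsPrecubical) {x y : P.cell} {u : Fin (P.deg x) → unitInterval}
    {v : Fin (P.deg y) → unitInterval} (h : P.pt x u = P.pt y v) :
    NFaux P (P.deg x) x u = NFaux P (P.deg y) y v :=
  NF_eqvGen hP (Quot.eqvGen_exact h)

lemma pt_interior_gen (hP : P.IsPrecubical) {x y : P.cell} {u : Fin (P.deg x) → unitInterval}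
    {v : Fin (P.deg y) → unitInterval} (h : P.pt x u = P.pt y v)
    (hu : ∀ j, (u j : ℝ) ∈ Set.Ioo (0:ℝ) 1) : x ∈ P.gen y := by
  have hnf := NF_of_pt_eq hP h
  rw [NFaux_interior hu] at hnf
  rw [hnf]
  exact NFaux_gen _ _ _

lemma pt_interior_eq (hP : P.IsPrecubical) {x y : P.cell} {u : Fin (P.deg x) → unitInterval}
    {v : Fin (P.deg y) → unitInterval} (h : P.pt x u = P.pt y v)
    (hu : ∀ j, (u j : ℝ) ∈ Set.Ioo (0:ℝ) 1) (hv : ∀ j, (v j : ℝ) ∈ Set.Ioo (0:ℝ) 1) :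
    x = y := by
  have hnf := NF_of_pt_eq hP h
  rwa [NFaux_interior hu, NFaux_interior hv] at hnf

lemma gen_sub {X : Set P.cell} (hX : P.IsSub X) {y : P.cell} (hy : y ∈ X) :
    P.gen y ⊆ X := by
  intro z hz
  induction hz using Relation.ReflTransGen.head_induction_on with
  | refl => exact hy
  | head hstep _ ih =>
    obtain ⟨b, i, hi1, hi2, hstep⟩ := hstep
    rw [hstep]
    exact hX b i _ hi1 hi2 ih

lemma mem_of_pt_mem_geomSet (hP : P.IsPrecubical) {S : Set P.cell} (hS : P.IsSub S)
    {x : P.cell} {u : Fin (P.deg x) → unitInterval} (hmem : P.pt x u ∈ P.geomSet S)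
    (hu : ∀ j, (u j : ℝ) ∈ Set.Ioo (0:ℝ) 1) : x ∈ S := by
  obtain ⟨y, hy, v, heq⟩ := hmem
  exact gen_sub hS hy (pt_interior_gen hP heq hu)

lemma pt_congr {x y : P.cell} (h : x = y) (u : Fin (P.deg x) → unitInterval)
    (v : Fin (P.deg y) → unitInterval) (huv : ∀ j : ℕ, extF u j = extF v j) :
    P.pt x u = P.pt y v := by
  subst h
  have : u = v := by
    funext j
    have := huv j
    rwa [extF_lt u j.2, extF_lt v j.2] at this
  rw [this]

end PrecubicalSet

namespace PrecubicalSet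

open Filter Topology

lemma tendsto_inv_nat_two :
    Filter.Tendsto (fun m : ℕ => 1 / ((m : ℝ) + 2)) atTop (nhds 0) := by
  have h := (tendsto_one_div_add_atTop_nhds_zero_nat (𝕜 := ℝ)).comp (tendsto_add_atTop_nat 1)
  convert h using 1
  funext m
  simp [Function.comp]
  push_cast
  ring

lemma interior_preserved {n : ℕ} {k l : Fin n → ℕ} (hl : ∀ i, 1 ≤ l i)
    (φ : (∀ i, Set.Icc (0:ℝ) (k i : ℝ)) ≃ₜ (∀ i, Set.Icc (0:ℝ) (l i : ℝ)))
    (hmono : ∀ s t, s ≤ t ↔ φ s ≤ φ t)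
    (x : ∀ i, Set.Icc (0:ℝ) (k i : ℝ)) (hx : ∀ i, 0 < (x i : ℝ) ∧ (x i : ℝ) < k i) :
    ∀ i, 0 < (φ x i : ℝ) ∧ (φ x i : ℝ) < l i := by
  intro i
  constructor
  · by_contra hcon
    have hzero : (φ x i : ℝ) = 0 := le_antisymm (not_lt.mp hcon) (φ x i).2.1
    set L : Set (∀ j, Set.Icc (0:ℝ) (k j : ℝ)) := {u | ∀ j, (u j : ℝ) < (x j : ℝ)} with hLdef
    have hLopen : IsOpen L := by
      have : L = ⋂ j, (fun u : ∀ j, Set.Icc (0:ℝ) (k j : ℝ) => u j) ⁻¹'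
          {c : Set.Icc (0:ℝ) (k j : ℝ) | (c : ℝ) < (x j : ℝ)} := by
        ext u; simp [hLdef, Set.mem_iInter]
      rw [this]
      exact isOpen_iInter_of_finite fun j =>
        (isOpen_lt continuous_subtype_val continuous_const).preimage (continuous_apply j)
    set O : Set (∀ j, Set.Icc (0:ℝ) (l j : ℝ)) := φ.symm ⁻¹' L with hOdef
    have hOopen : IsOpen O := hLopen.preimage φ.symm.continuous
    have hface : ∀ w ∈ O, (w i : ℝ) = 0 := by
      intro w hw
      have h1 : φ.symm w ≤ x := fun j => Subtype.coe_le_coe.mp (le_of_lt (hw j))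
      have h2 : w ≤ φ x := by
        have := (hmono (φ.symm w) x).mp h1
        rwa [φ.apply_symm_apply] at this
      have h3 : (w i : ℝ) ≤ (φ x i : ℝ) := Subtype.coe_le_coe.mpr (h2 i)
      rw [hzero] at h3
      exact le_antisymm h3 (w i).2.1
    have hy : (fun j => (⟨(x j : ℝ) / 2,
        ⟨by have := (x j).2.1; linarith [(hx j).1], by have := (x j).2.2; linarith [(hx j).1]⟩⟩ :
        Set.Icc (0:ℝ) (k j : ℝ))) ∈ L := by
      intro j
      simp only []
      linarith [(hx j).1]
    set v := φ (fun j => (⟨(x j : ℝ) / 2, _⟩ : Set.Icc (0:ℝ) (k j : ℝ))) with hvdef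
    have hvO : v ∈ O := by
      rw [hOdef, Set.mem_preimage, φ.symm_apply_apply]
      exact hy
    have hvi : (v i : ℝ) = 0 := hface v hvO
    set wseq : ℕ → (∀ j, Set.Icc (0:ℝ) (l j : ℝ)) := fun m =>
      Function.update v i (⟨1 / ((m : ℝ) + 2),
        ⟨by positivity, by
          have h1 : 1 / ((m : ℝ) + 2) ≤ 1 := by
            rw [div_le_one (by positivity)]; linarith [Nat.cast_nonneg (α := ℝ) m]
          have h2 : (1:ℝ) ≤ l i := by exact_mod_cast hl i
          linarith⟩⟩) with hwdef
    have hwt : Filter.Tendsto wseq atTop (nhds v) := by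
      rw [tendsto_pi_nhds]
      intro j
      by_cases hj : j = i
      · subst hj
        simp only [hwdef, Function.update_self]
        have hco : Filter.Tendsto (fun m : ℕ => 1 / ((m : ℝ) + 2)) atTop (nhds (v j : ℝ)) := by
          rw [hvi]; exact tendsto_inv_nat_two
        exact tendsto_subtype_rng.mpr hco
      · simp only [hwdef, Function.update_of_ne hj]
        exact tendsto_const_nhds
    obtain ⟨m, hm⟩ := (hwt.eventually (hOopen.mem_nhds hvO)).exists
    have hzero' := hface _ hm
    rw [hwdef] at hzero'
    simp only [Function.update_self] at hzero'
    exact absurd hzero' (by positivity : (0:ℝ) < 1 / ((m:ℝ) + 2)).ne'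
  · by_contra hcon
    have htop : (φ x i : ℝ) = l i := le_antisymm (φ x i).2.2 (not_lt.mp hcon)
    set L : Set (∀ j, Set.Icc (0:ℝ) (k j : ℝ)) := {u | ∀ j, (x j : ℝ) < (u j : ℝ)} with hLdef
    have hLopen : IsOpen L := by
      have : L = ⋂ j, (fun u : ∀ j, Set.Icc (0:ℝ) (k j : ℝ) => u j) ⁻¹'
          {c : Set.Icc (0:ℝ) (k j : ℝ) | (x j : ℝ) < (c : ℝ)} := by
        ext u; simp [hLdef, Set.mem_iInter]
      rw [this]
      exact isOpen_iInter_of_finite fun j =>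
        (isOpen_lt continuous_const continuous_subtype_val).preimage (continuous_apply j)
    set O : Set (∀ j, Set.Icc (0:ℝ) (l j : ℝ)) := φ.symm ⁻¹' L with hOdef
    have hOopen : IsOpen O := hLopen.preimage φ.symm.continuous
    have hface : ∀ w ∈ O, (w i : ℝ) = l i := by
      intro w hw
      have h1 : x ≤ φ.symm w := fun j => Subtype.coe_le_coe.mp (le_of_lt (hw j))
      have h2 : φ x ≤ w := by
        have := (hmono x (φ.symm w)).mp h1
        rwa [φ.apply_symm_apply] at this
      have h3 : (φ x i : ℝ) ≤ (w i : ℝ) := Subtype.coe_le_coe.mpr (h2 i)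
      rw [htop] at h3
      exact le_antisymm (w i).2.2 h3
    have hy : (fun j => (⟨((x j : ℝ) + k j) / 2,
        ⟨by have := (x j).2.1; linarith [(hx j).2], by have := (x j).2.2; linarith [(hx j).2]⟩⟩ :
        Set.Icc (0:ℝ) (k j : ℝ))) ∈ L := by
      intro j
      simp only []
      linarith [(hx j).2]
    set v := φ (fun j => (⟨((x j : ℝ) + k j) / 2, _⟩ : Set.Icc (0:ℝ) (k j : ℝ))) with hvdef
    have hvO : v ∈ O := by
      rw [hOdef, Set.mem_preimage, φ.symm_apply_apply]
      exact hy
    have hvi : (v i : ℝ) = l i := hface v hvO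
    set wseq : ℕ → (∀ j, Set.Icc (0:ℝ) (l j : ℝ)) := fun m =>
      Function.update v i (⟨(l i : ℝ) - 1 / ((m : ℝ) + 2),
        ⟨by
          have h1 : 1 / ((m : ℝ) + 2) ≤ 1 := by
            rw [div_le_one (by positivity)]; linarith [Nat.cast_nonneg (α := ℝ) m]
          have h2 : (1:ℝ) ≤ l i := by exact_mod_cast hl i
          linarith, by
          have : (0:ℝ) < 1 / ((m : ℝ) + 2) := by positivity
          linarith⟩⟩) with hwdef
    have hwt : Filter.Tendsto wseq atTop (nhds v) := by
      rw [tendsto_pi_nhds]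
      intro j
      by_cases hj : j = i
      · subst hj
        simp only [hwdef, Function.update_self]
        have hco : Filter.Tendsto (fun m : ℕ => (l j : ℝ) - 1 / ((m : ℝ) + 2)) atTop
            (nhds (v j : ℝ)) := by
          rw [hvi]
          have := tendsto_const_nhds (x := (l j : ℝ)) (f := atTop (α := ℕ)) |>.sub
            tendsto_inv_nat_two
          simpa using this
        exact tendsto_subtype_rng.mpr hco
      · simp only [hwdef, Function.update_of_ne hj]
        exact tendsto_const_nhds
    obtain ⟨m, hm⟩ := (hwt.eventually (hOopen.mem_nhds hvO)).exists
    have hzero' := hface _ hm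
    rw [hwdef] at hzero'
    simp only [Function.update_self] at hzero'
    have : (0:ℝ) < 1 / ((m:ℝ) + 2) := by positivity
    linarith [hzero'.ge, hzero'.le]

end PrecubicalSet

namespace PrecubicalSet

variable {P : PrecubicalSet}

/-- Iterated-face map: apply to `p` the faces prescribed by the vertex
coordinates of the grid cell `c`, processing coordinates `n-1, n-2, …, n-t`. -/
noncomputable def chAux (P : PrecubicalSet) (p : P.cell) (n : ℕ) (c : Fin n → ℕ × Bool) :
    ℕ → P.cell
  | 0 => p
  | (t+1) =>
    if h : n - (t+1) < n then
      if (c ⟨n - (t+1), h⟩).2 then chAux P p n c t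
      else P.d (if (c ⟨n - (t+1), h⟩).1 = 1 then true else false) (n - t) (chAux P p n c t)
    else chAux P p n c t

lemma card_filter_lb {n : ℕ} (e : Fin n → Prop) [DecidablePred e] (m : ℕ) (hm : m < n) :
    (Finset.univ.filter fun i : Fin n => m ≤ (i : ℕ) ∧ e i).card
      = (Finset.univ.filter fun i : Fin n => m + 1 ≤ (i : ℕ) ∧ e i).card
        + (if e ⟨m, hm⟩ then 1 else 0) := by
  by_cases he : e ⟨m, hm⟩
  · rw [if_pos he]
    have hins : (Finset.univ.filter fun i : Fin n => m ≤ (i : ℕ) ∧ e i)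
        = insert ⟨m, hm⟩ (Finset.univ.filter fun i : Fin n => m + 1 ≤ (i : ℕ) ∧ e i) := by
      ext i
      simp only [Finset.mem_filter, Finset.mem_insert, Finset.mem_univ, true_and]
      constructor
      · rintro ⟨h1, h2⟩
        by_cases hi : (i : ℕ) = m
        · left; exact Fin.ext hi
        · right; exact ⟨by omega, h2⟩
      · rintro (rfl | ⟨h1, h2⟩)
        · exact ⟨le_refl m, he⟩
        · exact ⟨by omega, h2⟩
    rw [hins, Finset.card_insert_of_notMem (by
      simp only [Finset.mem_filter, Finset.mem_univ, true_and, not_and]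
      intro hcon
      omega)]
  · rw [if_neg he, add_zero]
    congr 1
    apply Finset.filter_congr
    intro i _
    constructor
    · rintro ⟨h1, h2⟩
      refine ⟨?_, h2⟩
      by_cases hi : (i : ℕ) = m
      · exact absurd h2 (by rw [show i = ⟨m, hm⟩ from Fin.ext hi]; exact he)
      · omega
    · rintro ⟨h1, h2⟩
      exact ⟨by omega, h2⟩

lemma chAux_deg (hP : P.IsPrecubical) (p : P.cell) {n : ℕ} (hp : P.deg p = n)
    (c : Fin n → ℕ × Bool) :
    ∀ t, t ≤ n → P.deg (chAux P p n c t)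
      = (n - t) + (Finset.univ.filter fun i : Fin n =>
          n - t ≤ (i : ℕ) ∧ (c i).2 = true).card := by
  intro t
  induction t with
  | zero =>
    intro _
    have hemp : (Finset.univ.filter fun i : Fin n =>
        n - 0 ≤ (i : ℕ) ∧ (c i).2 = true) = ∅ := by
      apply Finset.filter_false_of_mem
      intro i _
      have := i.isLt
      simp only [not_and]
      intro hcon
      omega
    rw [hemp]
    simpa [chAux] using hp
  | succ t IH =>
    intro ht
    have hlt : n - (t+1) < n := by omega
    have hstep := card_filter_lb (fun i : Fin n => (c i).2 = true) (n - (t+1)) hlt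
    rw [show n - (t+1) + 1 = n - t by omega] at hstep
    simp only [chAux]
    rw [dif_pos hlt]
    by_cases he : (c ⟨n - (t+1), hlt⟩).2 = true
    · rw [if_pos he, IH (by omega), hstep, if_pos he]
      omega
    · rw [if_neg he]
      rw [hP.1 _ (n - t) _ (by omega) (by rw [IH (by omega)]; omega)]
      rw [IH (by omega), hstep, if_neg he]
      omega

lemma chAux_top (p : P.cell) (n : ℕ) (c : Fin n → ℕ × Bool)
    (hc : ∀ i, (c i).2 = true) : ∀ t, chAux P p n c t = p := by
  intro t
  induction t with
  | zero => rfl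
  | succ t IH =>
    simp only [chAux]
    by_cases h : n - (t+1) < n
    · rw [dif_pos h, if_pos (hc _), IH]
    · rw [dif_neg h, IH]

end PrecubicalSet

namespace PrecubicalSet

variable {P : PrecubicalSet}

lemma card_filter_lt_orderIsoOfFin {n : ℕ} (E : Finset (Fin n)) (m : Fin E.card) :
    (E.filter fun i => i < ((E.orderIsoOfFin rfl) m : Fin n)).card = (m : ℕ) := by
  classical
  set σ := E.orderIsoOfFin rfl with hσ
  have hbij : (E.filter fun i => i < (σ m : Fin n)) =
      (Finset.univ.filter fun r : Fin E.card => r < m).image (fun r => (σ r : Fin n)) := by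
    ext i
    simp only [Finset.mem_filter, Finset.mem_image, Finset.mem_univ, true_and]
    constructor
    · rintro ⟨hiE, hilt⟩
      refine ⟨σ.symm ⟨i, hiE⟩, ?_, ?_⟩
      · have h1 : σ (σ.symm ⟨i, hiE⟩) < σ m := by
          rw [OrderIso.apply_symm_apply]
          exact Subtype.mk_lt_mk.mpr hilt
        exact σ.lt_iff_lt.mp h1
      · rw [OrderIso.apply_symm_apply]
    · rintro ⟨r, hrm, rfl⟩
      exact ⟨(σ r).2, Subtype.coe_lt_coe.mpr (σ.lt_iff_lt.mpr hrm)⟩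
  rw [hbij, Finset.card_image_of_injective _
    (fun a b hab => σ.injective (Subtype.val_injective hab))]
  have : (Finset.univ.filter fun r : Fin E.card => r < m) = Finset.Iio m := by
    ext r; simp [Finset.mem_Iio]
  rw [this, Fin.card_Iio]

lemma cnt_lt_cnt {n : ℕ} {c : Fin n → ℕ × Bool} {i i' : Fin n}
    (hi : (c i).2 = true) (hlt : i < i') :
    (Finset.univ.filter fun a => (c a).2 = true ∧ a < i).card
      < (Finset.univ.filter fun a => (c a).2 = true ∧ a < i').card := by
  apply Finset.card_lt_card
  rw [Finset.ssubset_iff_of_subset (by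
    intro a ha
    simp only [Finset.mem_filter, Finset.mem_univ, true_and] at ha ⊢
    exact ⟨ha.1, lt_trans ha.2 hlt⟩)]
  exact ⟨i, by simp [hi, hlt], by simp⟩

/-- The position of the `j`-th edge coordinate, with the characterization of
the grid boundary map. -/
lemma exists_ij {n : ℕ} (c : Fin n → ℕ × Bool) (b : Bool) {j : ℕ}
    (hj1 : 1 ≤ j) (hj2 : j ≤ gridDeg c) :
    ∃ ij : Fin n, (c ij).2 = true ∧
      (Finset.univ.filter fun i' => (c i').2 = true ∧ i' < ij).card + 1 = j ∧
      ∀ i : Fin n, gridD b j c i =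
        if i = ij then ((c i).1 + (if b then 1 else 0), false) else c i := by
  classical
  set E := (Finset.univ.filter fun i : Fin n => (c i).2 = true) with hE
  have hcard : E.card = gridDeg c := rfl
  have hjlt : j - 1 < E.card := by omega
  set σ := E.orderIsoOfFin rfl with hσ
  set ij : Fin n := (σ ⟨j - 1, hjlt⟩ : Fin n) with hij
  have hedge : (c ij).2 = true :=
    (Finset.mem_filter.mp (σ ⟨j - 1, hjlt⟩).2).2
  have hcnt : (Finset.univ.filter fun i' => (c i').2 = true ∧ i' < ij).card + 1 = j := by
    have h1 : (Finset.univ.filter fun i' => (c i').2 = true ∧ i' < ij)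
        = E.filter fun i' => i' < ij := by
      rw [hE, Finset.filter_filter]
    rw [h1, hij, card_filter_lt_orderIsoOfFin E ⟨j - 1, hjlt⟩]
    show j - 1 + 1 = j
    omega
  refine ⟨ij, hedge, hcnt, ?_⟩
  intro i
  unfold gridD
  by_cases hieq : i = ij
  · subst hieq
    rw [if_pos ⟨hedge, hcnt⟩, if_pos rfl]
  · rw [if_neg hieq, if_neg ?_]
    rintro ⟨he, hc⟩
    apply hieq
    rcases lt_trichotomy i ij with hlt | heq | hgt
    · exact absurd (hc.trans hcnt.symm) (by
        have := cnt_lt_cnt he hlt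
        omega)
    · exact heq
    · exact absurd (hcnt.trans hc.symm) (by
        have := cnt_lt_cnt hedge hgt
        omega)

end PrecubicalSet

namespace PrecubicalSet

variable {P : PrecubicalSet}

lemma chAux_gridD (hP : P.IsPrecubical) (p : P.cell) {n : ℕ} (hp : P.deg p = n)
    (c : Fin n → ℕ × Bool) (b : Bool) (ij : Fin n)
    (hedge : (c ij).2 = true) (hij0 : (c ij).1 = 0)
    (c' : Fin n → ℕ × Bool)
    (hc' : ∀ i : Fin n, c' i =
      if i = ij then ((c i).1 + (if b then 1 else 0), false) else c i) :
    ∀ t, t ≤ n →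
      (((ij : ℕ) < n - t → chAux P p n c' t = chAux P p n c t) ∧
       (n - t ≤ (ij : ℕ) → chAux P p n c' t = P.d b ((n - t) +
         (Finset.univ.filter fun i : Fin n =>
            n - t ≤ (i : ℕ) ∧ (i : ℕ) ≤ (ij : ℕ) ∧ (c i).2 = true).card)
         (chAux P p n c t))) := by
  intro t
  induction t with
  | zero =>
    exact fun _ => ⟨fun _ => rfl, fun hcon => absurd hcon (by have := ij.isLt; omega)⟩
  | succ t IH =>
    intro ht
    obtain ⟨IH1, IH2⟩ := IH (by omega)
    have hlt : n - (t+1) < n := by omega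
    have hstep := card_filter_lb
      (fun i : Fin n => (i : ℕ) ≤ (ij : ℕ) ∧ (c i).2 = true) (n - (t+1)) hlt
    rw [show n - (t+1) + 1 = n - t by omega] at hstep
    constructor
    · intro hbig
      have hne : (⟨n - (t+1), hlt⟩ : Fin n) ≠ ij := by
        intro hcon
        have h' : n - (t+1) = (ij : ℕ) := by
          have := congrArg Fin.val hcon
          simpa using this
        omega
      have hcc : c' ⟨n - (t+1), hlt⟩ = c ⟨n - (t+1), hlt⟩ := by rw [hc', if_neg hne]
      simp only [chAux]
      rw [dif_pos hlt, dif_pos hlt, hcc, IH1 (by omega)]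
    · intro hbig
      by_cases hcase : (ij : ℕ) = n - (t+1)
      · have hieq : (⟨n - (t+1), hlt⟩ : Fin n) = ij := Fin.ext (by simpa using hcase.symm)
        have hcij : c' ⟨n - (t+1), hlt⟩ = ((if b then 1 else 0 : ℕ), false) := by
          rw [hc', if_pos hieq, hieq, hij0]
          simp
        have hcard1 : (Finset.univ.filter fun i : Fin n =>
            n - (t+1) ≤ (i : ℕ) ∧ (i : ℕ) ≤ (ij : ℕ) ∧ (c i).2 = true).card = 1 := by
          rw [show (Finset.univ.filter fun i : Fin n =>
              n - (t+1) ≤ (i : ℕ) ∧ (i : ℕ) ≤ (ij : ℕ) ∧ (c i).2 = true) = {ij} from ?_]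
          · exact Finset.card_singleton ij
          · ext i
            simp only [Finset.mem_filter, Finset.mem_univ, true_and, Finset.mem_singleton]
            constructor
            · rintro ⟨h1, h2, h3⟩
              exact Fin.ext (by omega)
            · rintro rfl
              exact ⟨by omega, le_refl _, hedge⟩
        have hchc : chAux P p n c (t+1) = chAux P p n c t := by
          simp only [chAux]
          rw [dif_pos hlt, if_pos (by rw [hieq]; exact hedge)]
        have hb : (if (if b then (1:ℕ) else 0) = 1 then true else false) = b := by
          cases b <;> simp
        rw [hchc, hcard1]
        simp only [chAux]
        rw [dif_pos hlt, hcij]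
        dsimp only
        rw [if_neg (by simp), hb, IH1 (by omega),
          show n - (t+1) + 1 = n - t by omega]
      · have hij2 : n - t ≤ (ij : ℕ) := by omega
        have hne : (⟨n - (t+1), hlt⟩ : Fin n) ≠ ij := by
          intro hcon
          have := congrArg Fin.val hcon
          simp only [] at this
          omega
        have hcc : c' ⟨n - (t+1), hlt⟩ = c ⟨n - (t+1), hlt⟩ := by rw [hc', if_neg hne]
        have hEt1 : 1 ≤ (Finset.univ.filter fun i : Fin n =>
            n - t ≤ (i : ℕ) ∧ (i : ℕ) ≤ (ij : ℕ) ∧ (c i).2 = true).card :=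
          Finset.card_pos.mpr ⟨ij, by
            simp only [Finset.mem_filter, Finset.mem_univ, true_and]
            exact ⟨hij2, le_refl _, hedge⟩⟩
        have hEtC : (Finset.univ.filter fun i : Fin n =>
              n - t ≤ (i : ℕ) ∧ (i : ℕ) ≤ (ij : ℕ) ∧ (c i).2 = true).card
            ≤ (Finset.univ.filter fun i : Fin n =>
              n - t ≤ (i : ℕ) ∧ (c i).2 = true).card := by
          apply Finset.card_le_card
          intro a ha
          simp only [Finset.mem_filter, Finset.mem_univ, true_and] at ha ⊢
          exact ⟨ha.1, ha.2.2⟩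
        simp only [chAux]
        rw [dif_pos hlt, dif_pos hlt, hcc]
        by_cases he : (c ⟨n - (t+1), hlt⟩).2 = true
        · rw [if_pos he, if_pos he, IH2 hij2, hstep,
            if_pos (show n - (t+1) ≤ (ij : ℕ) ∧ (c ⟨n - (t+1), hlt⟩).2 = true
              from ⟨by omega, he⟩)]
          congr 1
          omega
        · rw [if_neg he, if_neg he, IH2 hij2, hstep,
            if_neg (show ¬(n - (t+1) ≤ (ij : ℕ) ∧ (c ⟨n - (t+1), hlt⟩).2 = true)
              from fun hcon => he hcon.2)]
          rw [hP.2 _ b (n - t) _ _ (by omega) (by omega)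
            (by rw [chAux_deg hP p hp c t (by omega)]; omega)]
          congr 1
          omega

/-- The characteristic morphism `⟦0,1⟧^{⊗ n} → P` of an `n`-cube `p`. -/
noncomputable def charHom (hP : P.IsPrecubical) (p : P.cell) :
    PrecubicalHom (BoxData (fun _ : Fin (P.deg p) => 1)) P where
  map := fun x => chAux P p (P.deg p) x.1 (P.deg p)
  deg_map := fun x => by
    rw [chAux_deg hP p rfl x.1 (P.deg p) le_rfl]
    simp only [Nat.sub_self, zero_add, Nat.zero_le, true_and]
    rfl
  d_map := by
    intro b j x hj1 hj2
    obtain ⟨ij, hedge, hcnt, hgrid⟩ := exists_ij x.1 b hj1 hj2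
    have hij0 : (x.1 ij).1 = 0 := by
      have h2 := x.2 ij
      rw [hedge] at h2
      simp only [if_true] at h2
      omega
    have hres := (chAux_gridD hP p rfl x.1 b ij hedge hij0 (gridD b j x.1) hgrid
      (P.deg p) le_rfl).2 (by omega)
    show chAux P p (P.deg p) (gridD b j x.1) (P.deg p) = _
    rw [hres]
    congr 1
    rw [Nat.sub_self, zero_add]
    have hsplit : (Finset.univ.filter fun i : Fin (P.deg p) =>
        0 ≤ (i : ℕ) ∧ (i : ℕ) ≤ (ij : ℕ) ∧ (x.1 i).2 = true)
        = insert ij (Finset.univ.filter fun i : Fin (P.deg p) =>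
            (x.1 i).2 = true ∧ i < ij) := by
      ext i
      simp only [Finset.mem_filter, Finset.mem_univ, true_and, Finset.mem_insert]
      constructor
      · rintro ⟨_, h2, h3⟩
        by_cases hie : i = ij
        · left; exact hie
        · right
          refine ⟨h3, ?_⟩
          have : (i : ℕ) ≠ (ij : ℕ) := fun hcon => hie (Fin.ext hcon)
          exact Fin.lt_def.mpr (by omega)
      · rintro (rfl | ⟨h1, h2⟩)
        · exact ⟨Nat.zero_le _, le_refl _, hedge⟩
        · have := Fin.lt_def.mp h2
          exact ⟨Nat.zero_le _, by omega, h1⟩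
    rw [hsplit, Finset.card_insert_of_notMem (by
      simp only [Finset.mem_filter, Finset.mem_univ, true_and, not_and]
      intro _
      exact lt_irrefl ij)]
    omega

lemma charHom_top (hP : P.IsPrecubical) (p : P.cell)
    (x : (BoxData (fun _ : Fin (P.deg p) => 1)).cell) (hx : ∀ i, (x.1 i).2 = true) :
    (charHom hP p).map x = p :=
  chAux_top p (P.deg p) x.1 hx (P.deg p)

end PrecubicalSet

namespace PrecubicalSet

variable {P : PrecubicalSet}

lemma cellOf_snd_true_iff {n : ℕ} {k : Fin n → ℕ} (t : ∀ i, Set.Icc (0:ℝ) (k i : ℝ))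
    (i : Fin n) :
    ((cellOf k t).1 i).2 = true ↔ (t i : ℝ) ≠ (⌊(t i : ℝ)⌋ : ℤ) := by
  show ((if ((t i : ℝ) = (⌊(t i : ℝ)⌋ : ℤ)) then ((⌊(t i : ℝ)⌋).toNat, false)
    else ((⌊(t i : ℝ)⌋).toNat, true)).2 = true) ↔ _
  split_ifs with h
  · exact ⟨fun hc => absurd hc (by simp), fun hc => absurd h hc⟩
  · exact ⟨fun _ => h, fun _ => rfl⟩

lemma cellOf_vertex_val {n : ℕ} {k : Fin n → ℕ} (t : ∀ i, Set.Icc (0:ℝ) (k i : ℝ))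
    (i : Fin n) (h : ¬ ((cellOf k t).1 i).2 = true) :
    ((((cellOf k t).1 i).1 : ℕ) : ℝ) = (t i : ℝ) := by
  have heq : (t i : ℝ) = (⌊(t i : ℝ)⌋ : ℤ) := by
    by_contra hcon
    exact h ((cellOf_snd_true_iff t i).mpr hcon)
  show (((if ((t i : ℝ) = (⌊(t i : ℝ)⌋ : ℤ)) then ((⌊(t i : ℝ)⌋).toNat, false)
    else ((⌊(t i : ℝ)⌋).toNat, true)).1 : ℕ) : ℝ) = (t i : ℝ)
  rw [if_pos heq]
  have h0 : 0 ≤ ⌊(t i : ℝ)⌋ := Int.floor_nonneg.mpr (t i).2.1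
  have hcast : (((⌊(t i : ℝ)⌋).toNat : ℕ) : ℝ) = ((⌊(t i : ℝ)⌋ : ℤ) : ℝ) := by
    exact_mod_cast congrArg (fun z : ℤ => (z : ℝ)) (Int.toNat_of_nonneg h0)
  show (((⌊(t i : ℝ)⌋).toNat : ℕ) : ℝ) = _
  rw [hcast, ← heq]

lemma cellOf_fst_le {n : ℕ} {k : Fin n → ℕ} (t : ∀ i, Set.Icc (0:ℝ) (k i : ℝ))
    (i : Fin n) : ((((cellOf k t).1 i).1 : ℕ) : ℝ) ≤ (t i : ℝ) := by
  have h0 : 0 ≤ ⌊(t i : ℝ)⌋ := Int.floor_nonneg.mpr (t i).2.1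
  have hle : ((⌊(t i : ℝ)⌋.toNat : ℕ) : ℝ) ≤ (t i : ℝ) := by
    have := Int.floor_le (t i : ℝ)
    rw [show ((⌊(t i : ℝ)⌋.toNat : ℕ) : ℝ) = ((⌊(t i : ℝ)⌋ : ℤ) : ℝ) by
      exact_mod_cast congrArg (fun z : ℤ => (z : ℝ)) (Int.toNat_of_nonneg h0)]
    exact this
  show ((((if ((t i : ℝ) = (⌊(t i : ℝ)⌋ : ℤ)) then ((⌊(t i : ℝ)⌋).toNat, false)
    else ((⌊(t i : ℝ)⌋).toNat, true)).1 : ℕ) : ℝ)) ≤ (t i : ℝ)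
  split_ifs <;> exact hle

lemma uOf_mem_Ioo {n : ℕ} (k : Fin n → ℕ) (t : ∀ i, Set.Icc (0:ℝ) (k i : ℝ))
    (m : Fin ((BoxData k).deg (cellOf k t))) :
    ((uOf k t m : unitInterval) : ℝ) ∈ Set.Ioo (0:ℝ) 1 := by
  have hmem := ((((Finset.univ.filter
      fun i => (((cellOf k t).1 i).2 = true)).orderIsoOfFin rfl) m)).2
  have hedge := (Finset.mem_filter.mp hmem).2
  have hne := (cellOf_snd_true_iff t _).mp hedge
  constructor
  · show (0:ℝ) < Int.fract _
    rcases lt_or_eq_of_le (Int.fract_nonneg ((t ((((Finset.univ.filter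
        fun i => (((cellOf k t).1 i).2 = true)).orderIsoOfFin rfl) m : _) : Fin n)) : ℝ))
      with h | h
    · exact h
    · exfalso
      apply hne
      have := h.symm
      rw [Int.fract, sub_eq_zero] at this
      exact this
  · exact Int.fract_lt_one _

/-- The midpoint of (the realisation of) a cell of a box. -/
lemma midcell {n : ℕ} (l : Fin n → ℕ) (D : (BoxData l).cell) :
    ∃ t' : ∀ i, Set.Icc (0:ℝ) (l i : ℝ),
      cellOf l t' = D ∧ (∀ m, uOf l t' m = half) ∧
      (∀ i, (D.1 i).2 = true → 0 < (t' i : ℝ) ∧ (t' i : ℝ) < l i) ∧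
      (∀ i, ¬ (D.1 i).2 = true → (t' i : ℝ) = (((D.1 i).1 : ℕ) : ℝ)) := by
  have hbound : ∀ i : Fin n, ((D.1 i).1 : ℝ) + (if (D.1 i).2 then 1/2 else 0) ≤ l i := by
    intro i
    have h2 := D.2 i
    by_cases he : (D.1 i).2 = true
    · rw [if_pos he]
      rw [he] at h2
      simp only [if_true] at h2
      have : ((D.1 i).1 : ℝ) + 1 ≤ l i := by exact_mod_cast h2
      linarith
    · rw [if_neg he]
      rw [if_neg he] at h2
      have : ((D.1 i).1 : ℝ) ≤ l i := by exact_mod_cast (by omega : (D.1 i).1 ≤ l i)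
      linarith
  set t' : ∀ i, Set.Icc (0:ℝ) (l i : ℝ) := fun i =>
    ⟨((D.1 i).1 : ℝ) + (if (D.1 i).2 then 1/2 else 0), by positivity, hbound i⟩ with ht'
  have hval : ∀ i, (t' i : ℝ) = ((D.1 i).1 : ℝ) + (if (D.1 i).2 then 1/2 else 0) :=
    fun i => rfl
  have hfloor : ∀ i, ⌊(t' i : ℝ)⌋ = ((D.1 i).1 : ℤ) := by
    intro i
    rw [hval i]
    by_cases he : (D.1 i).2 = true
    · rw [if_pos he, show (((D.1 i).1 : ℕ) : ℝ) = (((D.1 i).1 : ℕ) : ℤ) by push_cast; ring,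
        Int.floor_intCast_add]
      norm_num
    · rw [if_neg he, add_zero]
      exact_mod_cast Int.floor_natCast (R := ℝ) (D.1 i).1
  have hcell : cellOf l t' = D := by
    apply Subtype.ext
    funext i
    show (if ((t' i : ℝ) = (⌊(t' i : ℝ)⌋ : ℤ)) then ((⌊(t' i : ℝ)⌋).toNat, false)
      else ((⌊(t' i : ℝ)⌋).toNat, true)) = D.1 i
    by_cases he : (D.1 i).2 = true
    · rw [if_neg (by
        rw [hfloor i, hval i, if_pos he]
        push_cast
        norm_num)]
      rw [hfloor i]
      rw [show ((D.1 i).1 : ℤ).toNat = (D.1 i).1 from Int.toNat_natCast _]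
      rw [show D.1 i = ((D.1 i).1, (D.1 i).2) from rfl]
      rw [he]
    · rw [if_pos (by
        rw [hfloor i, hval i, if_neg he]
        push_cast
        ring)]
      rw [hfloor i]
      rw [show ((D.1 i).1 : ℤ).toNat = (D.1 i).1 from Int.toNat_natCast _]
      rw [show D.1 i = ((D.1 i).1, (D.1 i).2) from rfl]
      simp only [Bool.not_eq_true] at he
      rw [he]
  refine ⟨t', hcell, ?_, ?_, ?_⟩
  · intro m
    set i0 : Fin n := ((((Finset.univ.filter
        fun i => (((cellOf l t').1 i).2 = true)).orderIsoOfFin rfl) m : _) : Fin n) with hi0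
    have hmem := ((((Finset.univ.filter
        fun i => (((cellOf l t').1 i).2 = true)).orderIsoOfFin rfl) m)).2
    have hedge : ((cellOf l t').1 i0).2 = true := (Finset.mem_filter.mp hmem).2
    have hedge' : (D.1 i0).2 = true := by
      have hc1 : (cellOf l t').1 i0 = D.1 i0 := by rw [hcell]
      rw [← hc1]
      exact hedge
    apply Subtype.ext
    show Int.fract ((t' i0 : ℝ)) = (1/2 : ℝ)
    rw [hval i0, if_pos hedge']
    rw [show (((D.1 i0).1 : ℕ) : ℝ) = (((D.1 i0).1 : ℕ) : ℤ) by push_cast; ring]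
    rw [Int.fract_intCast_add, Int.fract_eq_self.mpr (by norm_num)]
  · intro i he
    constructor
    · rw [hval i, if_pos he]
      positivity
    · have h2 := D.2 i
      rw [he] at h2
      simp only [if_true] at h2
      rw [hval i, if_pos he]
      have : ((D.1 i).1 : ℝ) + 1 ≤ l i := by exact_mod_cast h2
      linarith
  · intro i he
    rw [hval i, if_neg he, add_zero]

end PrecubicalSet


open PrecubicalSet in
/-- Let `f : |P| → |Q|` be a weak morphism of precubical sets
that is a homeomorphism, `X ⊆ P` and `A ⊆ Q` precubical subsets and `a ∈ Q`.
With `c` the carrier function of `f` and `f(X)` the image precubical subset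
(the unique precubical subset with `f(|X|) = |f(X)|`, here given by `FX`, resp.
`B` for `f(c(A))`): (i) `a ∈ f(X) ↔ c(a) ∈ X`; (ii) `A ⊆ f(c(A))`;
(iii) `c(f(X)) = X`. -/
theorem carrier_image_properties (P Q : PrecubicalSet)
    (hP : P.IsPrecubical) (hQ : Q.IsPrecubical)
    (f : P.GeomReal ≃ₜ Q.GeomReal) (hf : IsWeakMorphism (P := P) (Q := Q) f)
    (c : Q.cell → P.cell) (hc : ∀ a, IsCarrier (P := P) (Q := Q) f (c a) a)
    (X : Set P.cell) (hX : P.IsSub X) (A : Set Q.cell) (hA : Q.IsSub A)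
    (FX : Set Q.cell) (hFX : Q.IsSub FX)
    (hFXim : f '' P.geomSet X = Q.geomSet FX)
    (B : Set Q.cell) (hB : Q.IsSub B)
    (hBim : f '' P.geomSet (carrierSet c A) = Q.geomSet B) :
    (∀ a : Q.cell, a ∈ FX ↔ c a ∈ X) ∧
      A ⊆ B ∧
      carrierSet c FX = X := by
  have hi : ∀ a : Q.cell, a ∈ FX ↔ c a ∈ X := by
    intro a
    obtain ⟨u, hu, hfu⟩ := hc a
    constructor
    · intro ha
      have h1 : Q.pt a (fun _ => half) ∈ Q.geomSet FX := ⟨a, ha, _, rfl⟩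
      rw [← hFXim] at h1
      obtain ⟨z, hz, hfz⟩ := h1
      have hz2 : z = P.pt (c a) u := f.injective (by rw [hfz, hfu])
      rw [hz2] at hz
      exact mem_of_pt_mem_geomSet hP hX hz hu
    · intro hca
      have h1 : f (P.pt (c a) u) ∈ Q.geomSet FX := by
        rw [← hFXim]
        exact ⟨P.pt (c a) u, ⟨c a, hca, u, rfl⟩, rfl⟩
      rw [hfu] at h1
      exact mem_of_pt_mem_geomSet hQ hFX h1 (fun _ => half_mem_Ioo)
  have hii : A ⊆ B := by
    intro a ha
    obtain ⟨u, hu, hfu⟩ := hc a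
    have h1 : f (P.pt (c a) u) ∈ Q.geomSet B := by
      rw [← hBim]
      exact ⟨P.pt (c a) u, ⟨c a, ⟨a, ha, Relation.ReflTransGen.refl⟩, u, rfl⟩, rfl⟩
    rw [hfu] at h1
    exact mem_of_pt_mem_geomSet hQ hB h1 (fun _ => half_mem_Ioo)
  refine ⟨hi, hii, Set.Subset.antisymm ?_ ?_⟩
  · rintro p ⟨a, haFX, hgen⟩
    exact gen_sub hX ((hi a).1 haFX) hgen
  · intro p hpX
    obtain ⟨l, hl, χ, φ, hφmono, hφf⟩ :=
      hf.2 (P.deg p) (fun _ => 1) (fun _ => le_rfl) (charHom hP p)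
    set t₀ : ∀ i : Fin (P.deg p),
        Set.Icc (0:ℝ) (((fun _ : Fin (P.deg p) => (1:ℕ)) i : ℕ) : ℝ) :=
      fun _ => ⟨1/2, by norm_num⟩ with ht₀def
    have ht₀ : ∀ i, 0 < (t₀ i : ℝ) ∧
        (t₀ i : ℝ) < (((fun _ : Fin (P.deg p) => (1:ℕ)) i : ℕ) : ℝ) := by
      intro i
      constructor <;> norm_num [ht₀def]
    have hφt₀ := interior_preserved hl φ hφmono t₀ ht₀
    have hcell₀ : ∀ i, (((cellOf (fun _ : Fin (P.deg p) => 1) t₀).1 i).2 = true) := by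
      intro i
      rw [cellOf_snd_true_iff]
      have h0 : ⌊(t₀ i : ℝ)⌋ = 0 := by
        apply Int.floor_eq_zero_iff.mpr
        constructor <;> norm_num [ht₀def]
      rw [h0]
      norm_num [ht₀def]
    have hmap₀ : (charHom hP p).map (cellOf (fun _ : Fin (P.deg p) => 1) t₀) = p :=
      charHom_top hP p _ hcell₀
    have hmem1 : f (realBox (charHom hP p) t₀) ∈ Q.geomSet FX := by
      rw [← hFXim]
      refine ⟨realBox (charHom hP p) t₀, ?_, rfl⟩
      exact ⟨(charHom hP p).map (cellOf (fun _ : Fin (P.deg p) => 1) t₀),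
        by rw [hmap₀]; exact hpX, _, rfl⟩
    rw [hφf t₀] at hmem1
    obtain ⟨a'', ha'', v'', heq⟩ := hmem1
    have haFX : χ.map (cellOf l (φ t₀)) ∈ FX := by
      have hgen := pt_interior_gen hQ
        (show Q.pt (χ.map (cellOf l (φ t₀)))
            (uOf l (φ t₀) ∘ Fin.cast (χ.deg_map _)) = Q.pt a'' v'' from heq)
        (fun j => uOf_mem_Ioo _ _ _)
      exact gen_sub hFX ha'' hgen
    obtain ⟨t', hcellt', huOft', hedget', hvertt'⟩ := midcell l (cellOf l (φ t₀))
    have ht'full : ∀ i, 0 < (t' i : ℝ) ∧ (t' i : ℝ) < l i := by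
      intro i
      by_cases hD : ((cellOf l (φ t₀)).1 i).2 = true
      · exact hedget' i hD
      · rw [hvertt' i hD, cellOf_vertex_val (φ t₀) i hD]
        exact hφt₀ i
    have hmono' : ∀ s t, s ≤ t ↔ φ.symm s ≤ φ.symm t := by
      intro s t
      have h2 := hφmono (φ.symm s) (φ.symm t)
      rw [φ.apply_symm_apply, φ.apply_symm_apply] at h2
      exact h2.symm
    have hsfull := interior_preserved (fun _ => le_rfl) φ.symm hmono' t' ht'full
    have hcells : ∀ i,
        (((cellOf (fun _ : Fin (P.deg p) => 1) (φ.symm t')).1 i).2 = true) := by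
      intro i
      rw [cellOf_snd_true_iff]
      have h0 : ⌊(φ.symm t' i : ℝ)⌋ = 0 := by
        apply Int.floor_eq_zero_iff.mpr
        refine ⟨(hsfull i).1.le, ?_⟩
        have := (hsfull i).2
        simpa using this
      rw [h0]
      push_cast
      exact ne_of_gt (hsfull i).1
    have hmaps : (charHom hP p).map (cellOf (fun _ : Fin (P.deg p) => 1) (φ.symm t')) = p :=
      charHom_top hP p _ hcells
    have hkey : f (realBox (charHom hP p) (φ.symm t'))
        = Q.pt (χ.map (cellOf l (φ t₀))) (fun _ => half) := by
      rw [hφf (φ.symm t'), φ.apply_symm_apply]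
      show Q.pt (χ.map (cellOf l t')) (uOf l t' ∘ Fin.cast (χ.deg_map _)) = _
      refine pt_congr (congrArg χ.map hcellt') _ _ (fun j => ?_)
      have hdeq : Q.deg (χ.map (cellOf l t')) = Q.deg (χ.map (cellOf l (φ t₀))) := by
        rw [hcellt']
      by_cases hj : j < Q.deg (χ.map (cellOf l t'))
      · rw [extF_lt _ hj, extF_lt _ (show j < Q.deg (χ.map (cellOf l (φ t₀))) by omega)]
        exact huOft' _
      · rw [extF_ge _ hj, extF_ge _ (show ¬ j < Q.deg (χ.map (cellOf l (φ t₀))) by omega)]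
    obtain ⟨uca, huca, hfuca⟩ := hc (χ.map (cellOf l (φ t₀)))
    have hpteq : P.pt ((charHom hP p).map (cellOf (fun _ : Fin (P.deg p) => 1) (φ.symm t')))
          (uOf (fun _ : Fin (P.deg p) => 1) (φ.symm t') ∘ Fin.cast ((charHom hP p).deg_map _))
        = P.pt (c (χ.map (cellOf l (φ t₀)))) uca :=
      f.injective (by
        rw [hfuca]
        exact hkey)
    have hfinal : (charHom hP p).map (cellOf (fun _ : Fin (P.deg p) => 1) (φ.symm t'))
        = c (χ.map (cellOf l (φ t₀))) :=
      pt_interior_eq hP hpteq (fun j => uOf_mem_Ioo _ _ _) huca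
    exact ⟨χ.map (cellOf l (φ t₀)), haFX, by
      rw [← hfinal, hmaps]
      exact Relation.ReflTransGen.refl⟩
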